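/- The extended Kullback–Leibler divergence between a scalar-diagonal spectrum and a matrix spectrum is a pseudo-distance: let ψ : [-π,π] → ℝ be continuous with ψ(θ) > 0 for all θ, and let Φ : [-π,π] → ℂ^{m×m} be continuous with Φ(θ) Hermitian positive definite for all θ. Define D_KL(ψI_m ‖ Φ) = ∫_{-π}^{π} [ψ(θ)(m·log ψ(θ) − log det Φ(θ)) − m·ψ(θ) + tr Φ(θ)] dθ/(2π). Then D_KL(ψI_m ‖ Φ) ≥ 0, with equality if and only if Φ(θ) = ψ(θ)I_m for every θ ∈ [-π,π]. -/

import Mathlib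

open MeasureTheory Matrix
open scoped Real ComplexOrder

lemma key_nonneg {m : ℕ} (ψ : ℝ) (hψ : 0 < ψ) (A : Matrix (Fin m) (Fin m) ℂ) (hA : A.PosDef) :
    0 ≤ ψ * ((m : ℝ) * Real.log ψ - Real.log A.det.re) - (m : ℝ) * ψ + A.trace.re ∧
    (ψ * ((m : ℝ) * Real.log ψ - Real.log A.det.re) - (m : ℝ) * ψ + A.trace.re = 0 ↔
      A = ((ψ : ℂ)) • (1 : Matrix (Fin m) (Fin m) ℂ)) := by
  have hH := hA.isHermitian
  set lam := hH.eigenvalues with hlam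
  have hpos : ∀ i, 0 < lam i := hA.eigenvalues_pos
  have hdet : A.det.re = ∏ i, lam i := by
    rw [hH.det_eq_prod_eigenvalues]
    norm_cast
  have htr : A.trace.re = ∑ i, lam i := by
    have hU : (hH.eigenvectorUnitary : Matrix (Fin m) (Fin m) ℂ) *
        star (hH.eigenvectorUnitary : Matrix (Fin m) (Fin m) ℂ) = 1 :=
      Matrix.mem_unitaryGroup_iff.mp hH.eigenvectorUnitary.2
    have : A.trace = ∑ i, ((lam i : ℝ) : ℂ) := by
      conv_lhs => rw [hH.spectral_theorem]
      rw [Unitary.conjStarAlgAut_apply, Matrix.trace_mul_cycle]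
      rw [Matrix.mem_unitaryGroup_iff'.mp hH.eigenvectorUnitary.2, one_mul,
        Matrix.trace_diagonal]
      rfl
    rw [this]
    norm_cast
  set g : Fin m → ℝ := fun i => ψ * (Real.log ψ - Real.log (lam i)) - ψ + lam i with hg
  have hE : ψ * ((m : ℝ) * Real.log ψ - Real.log A.det.re) - (m : ℝ) * ψ + A.trace.re
      = ∑ i, g i := by
    rw [hdet, htr, Real.log_prod (fun i _ => (hpos i).ne')]
    simp only [hg, Finset.sum_add_distrib, Finset.sum_sub_distrib, ← Finset.mul_sum,
      Finset.sum_const, Finset.card_univ, Fintype.card_fin, nsmul_eq_mul, mul_sub]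
    try ring
  have hgle : ∀ i, ψ * (Real.log (lam i) - Real.log ψ) ≤ lam i - ψ := by
    intro i
    have h := Real.log_le_sub_one_of_pos (div_pos (hpos i) hψ)
    rw [Real.log_div (hpos i).ne' hψ.ne'] at h
    have h3 := mul_le_mul_of_nonneg_left h hψ.le
    have hcanc : ψ * (lam i / ψ) = lam i := by field_simp
    nlinarith [h3, hcanc]
  have hgnonneg : ∀ i, 0 ≤ g i := by
    intro i
    have := hgle i
    simp only [hg]
    nlinarith [this]
  have hgzero : ∀ i, g i = 0 → lam i = ψ := by
    intro i h0
    by_contra hne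
    have hne' : lam i / ψ ≠ 1 := by
      intro h; apply hne; field_simp at h; linarith
    have h := Real.log_lt_sub_one_of_pos (div_pos (hpos i) hψ) hne'
    rw [Real.log_div (hpos i).ne' hψ.ne'] at h
    have h3 := mul_lt_mul_of_pos_left h hψ
    have hcanc : ψ * (lam i / ψ) = lam i := by field_simp
    simp only [hg] at h0
    nlinarith [h3, hcanc]
  constructor
  · rw [hE]; exact Finset.sum_nonneg fun i _ => hgnonneg i
  constructor
  · intro h0
    rw [hE] at h0
    have hz : ∀ i ∈ Finset.univ, g i = 0 :=
      (Finset.sum_eq_zero_iff_of_nonneg (fun i _ => hgnonneg i)).mp h0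
    have hlamψ : ∀ i, lam i = ψ := fun i => hgzero i (hz i (Finset.mem_univ i))
    have hdiag : Matrix.diagonal (RCLike.ofReal ∘ lam) = (ψ : ℂ) • (1 : Matrix (Fin m) (Fin m) ℂ) := by
      ext i j
      by_cases hij : i = j
      · subst hij
        simp [Matrix.diagonal_apply_eq, Matrix.one_apply, hlamψ i]
      · simp [Matrix.diagonal_apply_ne _ hij, Matrix.one_apply, hij]
    have hU : (hH.eigenvectorUnitary : Matrix (Fin m) (Fin m) ℂ) *
        star (hH.eigenvectorUnitary : Matrix (Fin m) (Fin m) ℂ) = 1 :=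
      Matrix.mem_unitaryGroup_iff.mp hH.eigenvectorUnitary.2
    calc A = (hH.eigenvectorUnitary : Matrix (Fin m) (Fin m) ℂ)
          * Matrix.diagonal (RCLike.ofReal ∘ lam)
          * star (hH.eigenvectorUnitary : Matrix (Fin m) (Fin m) ℂ) := hH.spectral_theorem
      _ = (ψ : ℂ) • (1 : Matrix (Fin m) (Fin m) ℂ) := by
          rw [hdiag, Matrix.mul_smul, Matrix.smul_mul, mul_one, hU]
  · rintro rfl
    have hdet2 : (((ψ : ℂ) • (1 : Matrix (Fin m) (Fin m) ℂ)).det).re = ψ ^ m := by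
      rw [Matrix.det_smul, Matrix.det_one, mul_one, Fintype.card_fin, ← Complex.ofReal_pow,
        Complex.ofReal_re]
    have htr2 : (((ψ : ℂ) • (1 : Matrix (Fin m) (Fin m) ℂ)).trace).re = (m : ℝ) * ψ := by
      rw [Matrix.trace_smul, Matrix.trace_one, smul_eq_mul, Fintype.card_fin]
      push_cast
      simp [mul_comm]
    rw [hdet2, htr2, Real.log_pow]
    ring

/-- The extended Kullback–Leibler divergence `D_KL(ψ I_m ‖ Φ)` between the scalar-diagonal
spectrum `ψ I_m` and the matrix spectrum `Φ`. -/
noncomputable def DKL {m : ℕ} (ψ : ℝ → ℝ) (Φ : ℝ → Matrix (Fin m) (Fin m) ℂ) : ℝ :=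
  (∫ θ in (-π)..π, (ψ θ * ((m : ℝ) * Real.log (ψ θ) - Real.log (Φ θ).det.re)
      - (m : ℝ) * ψ θ + (Φ θ).trace.re)) / (2 * π)

/-- The extended Kullback–Leibler divergence between a scalar-diagonal
spectrum and a matrix spectrum is a pseudo-distance: `D_KL(ψ I_m ‖ Φ) ≥ 0`, with equality
iff `Φ(θ) = ψ(θ) I_m` for every `θ ∈ [-π,π]`. -/
theorem stmt12 (m : ℕ) (hm : 1 ≤ m)
    (ψ : ℝ → ℝ)
    (hψcont : ContinuousOn ψ (Set.Icc (-π) π))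
    (hψpos : ∀ θ ∈ Set.Icc (-π) π, 0 < ψ θ)
    (Φ : ℝ → Matrix (Fin m) (Fin m) ℂ)
    (hΦcont : ContinuousOn Φ (Set.Icc (-π) π))
    (hΦpd : ∀ θ ∈ Set.Icc (-π) π, (Φ θ).PosDef) :
    0 ≤ DKL ψ Φ ∧
    (DKL ψ Φ = 0 ↔ ∀ θ ∈ Set.Icc (-π) π,
      Φ θ = ((ψ θ : ℝ) : ℂ) • (1 : Matrix (Fin m) (Fin m) ℂ)) := by
  have hππ : -π ≤ π := by linarith [Real.pi_pos]
  have hππ' : -π < π := by linarith [Real.pi_pos]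
  set f : ℝ → ℝ := fun θ => ψ θ * ((m : ℝ) * Real.log (ψ θ) - Real.log (Φ θ).det.re)
      - (m : ℝ) * ψ θ + (Φ θ).trace.re with hf
  have hkey : ∀ θ ∈ Set.Icc (-π) π, 0 ≤ f θ ∧
      (f θ = 0 ↔ Φ θ = ((ψ θ : ℝ) : ℂ) • (1 : Matrix (Fin m) (Fin m) ℂ)) :=
    fun θ hθ => key_nonneg (ψ θ) (hψpos θ hθ) (Φ θ) (hΦpd θ hθ)
  have hdetre_pos : ∀ θ ∈ Set.Icc (-π) π, 0 < (Φ θ).det.re := by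
    intro θ hθ
    have h := (hΦpd θ hθ).det_pos
    rw [Complex.lt_def] at h
    simpa using h.1
  have hfc : ContinuousOn f (Set.Icc (-π) π) := by
    have hdetc : ContinuousOn (fun θ => (Φ θ).det.re) (Set.Icc (-π) π) :=
      Complex.continuous_re.comp_continuousOn ((continuous_id.matrix_det).comp_continuousOn hΦcont)
    have htrc : ContinuousOn (fun θ => (Φ θ).trace.re) (Set.Icc (-π) π) :=
      Complex.continuous_re.comp_continuousOn ((continuous_id.matrix_trace).comp_continuousOn hΦcont)
    exact ((hψcont.mul ((continuousOn_const.mul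
      (hψcont.log (fun θ hθ => (hψpos θ hθ).ne'))).sub
      (hdetc.log (fun θ hθ => (hdetre_pos θ hθ).ne')))).sub
      (continuousOn_const.mul hψcont)).add htrc
  have hfi : IntervalIntegrable f volume (-π) π :=
    (hfc.mono (by rw [Set.uIcc_of_le hππ])).intervalIntegrable
  have hDKL : DKL ψ Φ = (∫ θ in (-π)..π, f θ) / (2 * π) := rfl
  have h2π : 0 < 2 * π := by linarith [Real.pi_pos]
  have hint_nonneg : 0 ≤ ∫ θ in (-π)..π, f θ :=
    intervalIntegral.integral_nonneg hππ fun u hu => (hkey u hu).1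
  refine ⟨by rw [hDKL]; positivity, ?_⟩
  constructor
  · intro h0
    have hint0 : (∫ θ in (-π)..π, f θ) = 0 := by
      rw [hDKL, div_eq_zero_iff] at h0
      rcases h0 with h | h
      · exact h
      · exact absurd h h2π.ne'
    intro θ hθ
    rw [← (hkey θ hθ).2]
    by_contra hne
    have hfθ : 0 < f θ := lt_of_le_of_ne (hkey θ hθ).1 (Ne.symm hne)
    -- find a small interval around θ where f > 0
    have hcont := hfc θ hθ
    have hev : ∀ᶠ x in nhdsWithin θ (Set.Icc (-π) π), f x > f θ / 2 :=
      hcont.eventually (eventually_gt_nhds (half_lt_self hfθ))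
    rw [eventually_nhdsWithin_iff, Metric.eventually_nhds_iff] at hev
    obtain ⟨δ, hδ, hball⟩ := hev
    set c := max (θ - δ) (-π) with hc
    set d := min (θ + δ) π with hd
    have hcd : c < d := by
      rcases hθ with ⟨h1, h2⟩
      simp only [hc, hd, max_lt_iff, lt_min_iff]
      constructor
      · constructor <;> linarith
      · constructor <;> linarith
    have hIoo : Set.Ioo c d ⊆ Function.support f ∩ Set.Ioc (-π) π := by
      intro x hx
      have hx1 : x ∈ Set.Icc (-π) π :=
        ⟨le_of_lt (lt_of_le_of_lt (le_max_right _ _) hx.1),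
         le_of_lt (lt_of_lt_of_le hx.2 (min_le_right _ _))⟩
      have hx2 : dist x θ < δ := by
        rw [Real.dist_eq, abs_lt]
        constructor
        · have := lt_of_le_of_lt (le_max_left _ _) hx.1; linarith
        · have := lt_of_lt_of_le hx.2 (min_le_left _ _); linarith
      have := hball hx2 hx1
      refine ⟨?_, ?_⟩
      · simp only [Function.mem_support]
        exact (lt_trans (half_pos hfθ) this).ne'
      · exact ⟨lt_of_le_of_lt (le_max_right _ _) hx.1,
          le_of_lt (lt_of_lt_of_le hx.2 (min_le_right _ _))⟩
    have hnn : 0 ≤ᵐ[volume.restrict (Set.uIoc (-π) π)] f := by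
      rw [Set.uIoc_of_le hππ]
      exact MeasureTheory.ae_restrict_of_forall_mem measurableSet_Ioc
        (fun x hx => (hkey x ⟨le_of_lt hx.1, hx.2⟩).1)
    have hpos : 0 < ∫ θ in (-π)..π, f θ := by
      rw [intervalIntegral.integral_pos_iff_support_of_nonneg_ae' hnn hfi]
      refine ⟨hππ', ?_⟩
      calc (0 : ENNReal) < volume (Set.Ioo c d) := by
            rw [Real.volume_Ioo]; simp [ENNReal.ofReal_pos, hcd]
        _ ≤ volume (Function.support f ∩ Set.Ioc (-π) π) := measure_mono hIoo
    rw [hint0] at hpos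
    exact lt_irrefl 0 hpos
  · intro hall
    have hzero : ∀ θ ∈ Set.Icc (-π) π, f θ = 0 :=
      fun θ hθ => (hkey θ hθ).2.mpr (hall θ hθ)
    have : (∫ θ in (-π)..π, f θ) = ∫ θ in (-π)..π, (0 : ℝ) := by
      apply intervalIntegral.integral_congr
      rw [Set.uIcc_of_le hππ]
      exact hzero
    rw [hDKL, this]
    simp
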